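/- arXiv:0912.2507 — 2 statements merged into one kernel-verified Lean document; each statement's English description precedes it below -/
import Mathlib

section
/- Let χ be an integer, M(q) = ∏_{k≥1}(1−q^k)^{−k} over ℚ, N(q) = q (d/dq) log M(q), Δ = {(m₁,m₂,m₃) ∈ ℤ³_{≥0} : −m₃ ≤ m₁−m₂ < m₃}, and DT2(q) = (1/4)·M(q)^{2χ} − (χ/2)·{M(q)^χ · M(q)^χ · N(q)}_Δ. Then the coefficient of q² in DT2(q) minus (1/4) times the coefficient of q¹ in M(−q)^χ equals −χ. -/
open PowerSeries
open scoped Classical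

/-- The MacMahon function `M(q) = ∏_{k≥1} (1 − q^k)^{−k}` as a formal power series over
`ℚ`: its coefficient of `q^n` is the corresponding coefficient of the finite product
`∏_{k=1}^{n} (1 − q^k)^{−k}` (factors with `k > n` do not affect degrees `≤ n`). -/
noncomputable def MacMahon : PowerSeries ℚ :=
  PowerSeries.mk fun n =>
    PowerSeries.coeff n
      (∏ k ∈ Finset.Icc 1 n, ((1 - (PowerSeries.X : PowerSeries ℚ) ^ k)⁻¹) ^ k)

/-- `f^χ` for an integer exponent `χ` (for `f` with invertible constant term). -/
noncomputable def zpowPS (f : PowerSeries ℚ) (χ : ℤ) : PowerSeries ℚ :=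
  f ^ χ.toNat * f⁻¹ ^ (-χ).toNat

/-- `N(q) = q·(d/dq) log M(q) = q·M'(q)/M(q)`. -/
noncomputable def Nser : PowerSeries ℚ :=
  PowerSeries.X * PowerSeries.derivativeFun MacMahon * MacMahon⁻¹

/-- `{f₁·f₂·f₃}_Δ = ∑_{(n₁,n₂,n₃)∈Δ} a¹_{n₁} a²_{n₂} a³_{n₃} q^{n₁+n₂+n₃}` for a subset
`Δ ⊆ ℤ³_{≥0}` given by a predicate on `ℕ³`. -/
noncomputable def brace (P : ℕ → ℕ → ℕ → Prop) (f g h : PowerSeries ℚ) : PowerSeries ℚ :=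
  PowerSeries.mk fun n =>
    ∑ p ∈ (Finset.range (n + 1) ×ˢ Finset.range (n + 1) ×ˢ Finset.range (n + 1)).filter
        (fun p => p.1 + p.2.1 + p.2.2 = n ∧ P p.1 p.2.1 p.2.2),
      PowerSeries.coeff p.1 f * PowerSeries.coeff p.2.1 g * PowerSeries.coeff p.2.2 h

/-- `Δ = {(m₁,m₂,m₃) ∈ ℤ³_{≥0} : −m₃ ≤ m₁ − m₂ < m₃}`. -/
def DeltaP (m₁ m₂ m₃ : ℕ) : Prop :=
  -(m₃ : ℤ) ≤ (m₁ : ℤ) - (m₂ : ℤ) ∧ (m₁ : ℤ) - (m₂ : ℤ) < (m₃ : ℤ)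

/-- `DT2(q) = (1/4)·M(q)^{2χ} − (χ/2)·{M(q)^χ · M(q)^χ · N(q)}_Δ`. -/
noncomputable def DT2 (χ : ℤ) : PowerSeries ℚ :=
  ((1 : ℚ) / 4) • zpowPS MacMahon (2 * χ) -
    ((χ : ℚ) / 2) • brace DeltaP (zpowPS MacMahon χ) (zpowPS MacMahon χ) Nser

/-! ### Auxiliary coefficient lemmas -/

lemma c0_mul (f g : PowerSeries ℚ) :
    coeff 0 (f * g) = coeff 0 f * coeff 0 g := by
  simp [coeff_zero_eq_constantCoeff, map_mul]

lemma c1_mul (f g : PowerSeries ℚ) :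
    coeff 1 (f * g) = coeff 0 f * coeff 1 g + coeff 1 f * coeff 0 g := by
  rw [coeff_mul, Finset.Nat.sum_antidiagonal_eq_sum_range_succ_mk]
  simp [Finset.sum_range_succ]

lemma c2_mul (f g : PowerSeries ℚ) :
    coeff 2 (f * g) = coeff 0 f * coeff 2 g + coeff 1 f * coeff 1 g
      + coeff 2 f * coeff 0 g := by
  rw [coeff_mul, Finset.Nat.sum_antidiagonal_eq_sum_range_succ_mk]
  simp [Finset.sum_range_succ]

lemma c0_inv (f : PowerSeries ℚ) (h0 : coeff 0 f = 1) : coeff 0 f⁻¹ = 1 := by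
  rw [coeff_zero_eq_constantCoeff] at h0 ⊢
  rw [PowerSeries.constantCoeff_inv, h0, inv_one]

lemma fmul (f : PowerSeries ℚ) (h0 : coeff 0 f = 1) : f * f⁻¹ = 1 := by
  apply PowerSeries.mul_inv_cancel
  rw [← coeff_zero_eq_constantCoeff, h0]; norm_num

lemma c1_inv (f : PowerSeries ℚ) (h0 : coeff 0 f = 1) :
    coeff 1 f⁻¹ = - coeff 1 f := by
  have h := congrArg (coeff 1) (fmul f h0)
  rw [c1_mul, h0, c0_inv f h0, coeff_one] at h
  simp at h; linarith

lemma c2_inv (f : PowerSeries ℚ) (h0 : coeff 0 f = 1) :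
    coeff 2 f⁻¹ = (coeff 1 f)^2 - coeff 2 f := by
  have h := congrArg (coeff 2) (fmul f h0)
  rw [c2_mul, h0, c0_inv f h0, c1_inv f h0, coeff_one] at h
  simp at h; nlinarith [h]

lemma c0_pow (f : PowerSeries ℚ) (h0 : coeff 0 f = 1) (n : ℕ) : coeff 0 (f ^ n) = 1 := by
  simp only [coeff_zero_eq_constantCoeff] at h0 ⊢
  rw [map_pow, h0, one_pow]

lemma c1_pow (f : PowerSeries ℚ) (h0 : coeff 0 f = 1) (n : ℕ) :
    coeff 1 (f ^ n) = n * coeff 1 f := by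
  induction n with
  | zero => simp [coeff_one]
  | succ n ih =>
    rw [pow_succ, c1_mul, ih, c0_pow f h0, h0]
    push_cast; ring

lemma c2_pow (f : PowerSeries ℚ) (h0 : coeff 0 f = 1) (n : ℕ) : coeff 2 (f ^ n)
    = n * coeff 2 f + ((n:ℚ) * ((n:ℚ) - 1) / 2) * (coeff 1 f)^2 := by
  induction n with
  | zero => simp [coeff_one]
  | succ n ih =>
    rw [pow_succ, c2_mul, ih, c0_pow f h0, c1_pow f h0, h0]
    push_cast; ring

lemma c0_zpow (f : PowerSeries ℚ) (h0 : coeff 0 f = 1) (χ : ℤ) :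
    coeff 0 (zpowPS f χ) = 1 := by
  rw [zpowPS]
  rw [coeff_zero_eq_constantCoeff] at h0 ⊢
  simp [map_mul, map_pow, PowerSeries.constantCoeff_inv, h0]

lemma c1_zpow (f : PowerSeries ℚ) (h0 : coeff 0 f = 1) (χ : ℤ) :
    coeff 1 (zpowPS f χ) = (χ:ℚ) * coeff 1 f := by
  rcases le_or_gt 0 χ with h | h
  · have h1 : (-χ).toNat = 0 := by omega
    have h2 : ((χ.toNat : ℚ)) = (χ:ℚ) := by
      exact_mod_cast congrArg (Int.cast : ℤ → ℚ) (Int.toNat_of_nonneg h)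
    rw [zpowPS, h1, pow_zero, mul_one, c1_pow f h0, h2]
  · have h1 : χ.toNat = 0 := by omega
    have h2 : (((-χ).toNat : ℚ)) = -(χ:ℚ) := by
      have := Int.toNat_of_nonneg (by omega : (0:ℤ) ≤ -χ)
      exact_mod_cast congrArg (Int.cast : ℤ → ℚ) this
    rw [zpowPS, h1, pow_zero, one_mul, c1_pow f⁻¹ (c0_inv f h0), c1_inv f h0, h2]
    ring

lemma c2_zpow (f : PowerSeries ℚ) (h0 : coeff 0 f = 1) (χ : ℤ) :
    coeff 2 (zpowPS f χ) = (χ:ℚ) * coeff 2 f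
      + ((χ:ℚ) * ((χ:ℚ) - 1) / 2) * (coeff 1 f)^2 := by
  rcases le_or_gt 0 χ with h | h
  · have h1 : (-χ).toNat = 0 := by omega
    have h2 : ((χ.toNat : ℚ)) = (χ:ℚ) := by
      exact_mod_cast congrArg (Int.cast : ℤ → ℚ) (Int.toNat_of_nonneg h)
    rw [zpowPS, h1, pow_zero, mul_one, c2_pow f h0, h2]
  · have h1 : χ.toNat = 0 := by omega
    have h2 : (((-χ).toNat : ℚ)) = -(χ:ℚ) := by
      have := Int.toNat_of_nonneg (by omega : (0:ℤ) ≤ -χ)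
      exact_mod_cast congrArg (Int.cast : ℤ → ℚ) this
    rw [zpowPS, h1, pow_zero, one_mul, c2_pow f⁻¹ (c0_inv f h0), c1_inv f h0,
      c2_inv f h0, h2]
    ring

lemma cg0 : coeff 0 (1 - (X : PowerSeries ℚ)) = 1 := by simp
lemma cg1 : coeff 1 (1 - (X : PowerSeries ℚ)) = -1 := by simp [coeff_one]
lemma cg2 : coeff 2 (1 - (X : PowerSeries ℚ)) = 0 := by simp [coeff_one, coeff_X]
lemma ch0 : coeff 0 (1 - (X : PowerSeries ℚ)^2) = 1 := by simp [coeff_X_pow]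
lemma ch1 : coeff 1 (1 - (X : PowerSeries ℚ)^2) = 0 := by simp [coeff_one, coeff_X_pow]
lemma ch2 : coeff 2 (1 - (X : PowerSeries ℚ)^2) = -1 := by simp [coeff_one, coeff_X_pow]

lemma cM0 : coeff 0 MacMahon = 1 := by
  rw [MacMahon, coeff_mk]
  simp [coeff_one]

lemma cM1 : coeff 1 MacMahon = 1 := by
  rw [MacMahon, coeff_mk, show Finset.Icc 1 1 = {1} from rfl]
  rw [Finset.prod_singleton, pow_one, pow_one (X : PowerSeries ℚ), c1_inv _ cg0, cg1]
  norm_num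

lemma cM2 : coeff 2 MacMahon = 3 := by
  rw [MacMahon, coeff_mk, show Finset.Icc 1 2 = {1, 2} from rfl]
  rw [Finset.prod_insert (by decide), Finset.prod_singleton, pow_one,
    pow_one (X : PowerSeries ℚ)]
  rw [c2_mul]
  rw [c0_inv _ cg0, c1_inv _ cg0, c2_inv _ cg0, cg1, cg2]
  rw [c0_pow _ (c0_inv _ ch0), c1_pow _ (c0_inv _ ch0), c2_pow _ (c0_inv _ ch0)]
  rw [c1_inv _ ch0, c2_inv _ ch0, ch1, ch2]
  norm_num

lemma cN1 : coeff 1 Nser = 1 := by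
  rw [Nser, mul_assoc, coeff_succ_X_mul, c0_mul]
  rw [c0_inv _ cM0, show coeff 0 (derivativeFun MacMahon) = coeff 1 MacMahon * (0 + 1) from coeff_derivative (R := ℚ) MacMahon 0, cM1]
  norm_num

lemma cN2 : coeff 2 Nser = 5 := by
  rw [Nser, mul_assoc, show (2:ℕ) = 1 + 1 from rfl, coeff_succ_X_mul, c1_mul]
  rw [c0_inv _ cM0, c1_inv _ cM0, show coeff 0 (derivativeFun MacMahon) = coeff 1 MacMahon * (0 + 1) from coeff_derivative (R := ℚ) MacMahon 0, show coeff 1 (derivativeFun MacMahon) = coeff 2 MacMahon * (1 + 1) from coeff_derivative (R := ℚ) MacMahon 1, cM1, cM2]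
  norm_num

lemma cbrace2 (f g h : PowerSeries ℚ) :
    coeff 2 (brace DeltaP f g h) =
      coeff 0 f * coeff 1 g * coeff 1 h
        + coeff 0 f * coeff 0 g * coeff 2 h := by
  rw [brace, coeff_mk, Finset.sum_filter]
  norm_num [Finset.sum_product, Finset.sum_range_succ, DeltaP]
  ring

lemma cR0 : coeff 0 (PowerSeries.rescale (-1) MacMahon) = 1 := by
  rw [coeff_rescale, cM0]; norm_num

lemma cR1 : coeff 1 (PowerSeries.rescale (-1) MacMahon) = -1 := by
  rw [coeff_rescale, cM1]; norm_num

/-- the coefficient of `q²` in `DT2(q)` minus `(1/4)` times the coefficient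
of `q¹` in `M(−q)^χ` equals `−χ`. -/
theorem stmt9 (χ : ℤ) :
    PowerSeries.coeff 2 (DT2 χ) -
        (1 / 4 : ℚ) * PowerSeries.coeff 1 (zpowPS (PowerSeries.rescale (-1) MacMahon) χ) =
      -(χ : ℚ) := by
  rw [DT2, map_sub, map_smul, map_smul, smul_eq_mul, smul_eq_mul]
  rw [c2_zpow _ cM0, cbrace2, c0_zpow _ cM0, c1_zpow _ cM0,
    c1_zpow _ cR0, cM1, cM2, cN1, cN2, cR1]
  push_cast
  ring
end

section
/- Let χ be an integer, M(q) = ∏_{k≥1}(1−q^k)^{−k} over ℚ, N(q) = q (d/dq) log M(q), Δ = {(m₁,m₂,m₃) ∈ ℤ³_{≥0} : −m₃ ≤ m₁−m₂ < m₃}, and DT2(q) = (1/4)·M(q)^{2χ} − (χ/2)·{M(q)^χ · M(q)^χ · N(q)}_Δ. Then the coefficient of q³ in DT2(q) equals −(χ³ + 15χ² + 20χ)/6. -/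
open PowerSeries
open scoped Classical

open PowerSeries
open scoped Classical

lemma coeff0_mul (f g : PowerSeries ℚ) :
    PowerSeries.coeff 0 (f * g) = PowerSeries.coeff 0 f * PowerSeries.coeff 0 g := by
  rw [coeff_mul, Finset.Nat.sum_antidiagonal_eq_sum_range_succ_mk]
  simp

lemma coeff1_mul (f g : PowerSeries ℚ) :
    PowerSeries.coeff 1 (f * g) =
      PowerSeries.coeff 0 f * PowerSeries.coeff 1 g +
      PowerSeries.coeff 1 f * PowerSeries.coeff 0 g := by
  rw [coeff_mul, Finset.Nat.sum_antidiagonal_eq_sum_range_succ_mk]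
  simp [Finset.sum_range_succ]

lemma coeff2_mul (f g : PowerSeries ℚ) :
    PowerSeries.coeff 2 (f * g) =
      PowerSeries.coeff 0 f * PowerSeries.coeff 2 g +
      PowerSeries.coeff 1 f * PowerSeries.coeff 1 g +
      PowerSeries.coeff 2 f * PowerSeries.coeff 0 g := by
  rw [coeff_mul, Finset.Nat.sum_antidiagonal_eq_sum_range_succ_mk]
  simp [Finset.sum_range_succ]

lemma coeff3_mul (f g : PowerSeries ℚ) :
    PowerSeries.coeff 3 (f * g) =
      PowerSeries.coeff 0 f * PowerSeries.coeff 3 g +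
      PowerSeries.coeff 1 f * PowerSeries.coeff 2 g +
      PowerSeries.coeff 2 f * PowerSeries.coeff 1 g +
      PowerSeries.coeff 3 f * PowerSeries.coeff 0 g := by
  rw [coeff_mul, Finset.Nat.sum_antidiagonal_eq_sum_range_succ_mk]
  simp [Finset.sum_range_succ]

lemma geom (k : ℕ) (hk : 0 < k) :
    ((1 - (X : PowerSeries ℚ) ^ k)⁻¹) =
      PowerSeries.mk fun n => if k ∣ n then (1 : ℚ) else 0 := by
  symm
  rw [PowerSeries.eq_inv_iff_mul_eq_one]
  · ext n
    rw [mul_sub, mul_one, map_sub, PowerSeries.coeff_mul_X_pow', coeff_mk, coeff_one]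
    rcases Nat.eq_zero_or_pos n with h | h
    · subst h
      simp [Nat.not_succ_le_zero, hk.ne']
    · rw [if_neg h.ne']
      by_cases hd : k ∣ n
      · have hkn : k ≤ n := Nat.le_of_dvd h hd
        rw [if_pos hd, if_pos hkn, coeff_mk, if_pos (Nat.dvd_sub hd dvd_rfl)]
        norm_num
      · rw [if_neg hd]
        by_cases hkn : k ≤ n
        · rw [if_pos hkn, coeff_mk, if_neg, sub_zero]
          intro hdd
          have : n = (n - k) + k := by omega
          exact hd (this ▸ Nat.dvd_add hdd dvd_rfl)
        · simp [hkn]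
  · rw [map_sub, map_one, map_pow, constantCoeff_X, zero_pow hk.ne']
    norm_num

lemma Gcoeff (k n : ℕ) :
    PowerSeries.coeff n (PowerSeries.mk fun n => if k ∣ n then (1 : ℚ) else 0) =
      if k ∣ n then (1 : ℚ) else 0 := coeff_mk n _

lemma M0 : PowerSeries.coeff 0 MacMahon = 1 := by
  rw [MacMahon, coeff_mk]
  simp

lemma M1 : PowerSeries.coeff 1 MacMahon = 1 := by
  rw [MacMahon, coeff_mk, show Finset.Icc 1 1 = {1} from rfl, Finset.prod_singleton, pow_one,
    geom 1 one_pos, Gcoeff]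
  norm_num

lemma M2 : PowerSeries.coeff 2 MacMahon = 3 := by
  rw [MacMahon, coeff_mk, show Finset.Icc 1 2 = {1, 2} from rfl,
    Finset.prod_insert (by decide), Finset.prod_singleton, pow_one,
    geom 1 one_pos, geom 2 (by norm_num), sq,
    coeff2_mul, coeff2_mul, coeff1_mul, coeff0_mul]
  simp only [Gcoeff]
  norm_num

lemma M3 : PowerSeries.coeff 3 MacMahon = 6 := by
  rw [MacMahon, coeff_mk, show Finset.Icc 1 3 = {1, 2, 3} from rfl,
    Finset.prod_insert (by decide), Finset.prod_insert (by decide), Finset.prod_singleton,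
    pow_one, geom 1 one_pos, geom 2 (by norm_num), geom 3 (by norm_num), sq, pow_three]
  simp only [coeff3_mul, coeff2_mul, coeff1_mul, coeff0_mul, Gcoeff]
  norm_num

lemma hcc : PowerSeries.constantCoeff MacMahon ≠ 0 := by
  rw [← PowerSeries.coeff_zero_eq_constantCoeff, M0]
  norm_num

lemma Minv_coeffs :
    PowerSeries.coeff 0 MacMahon⁻¹ = 1 ∧ PowerSeries.coeff 1 MacMahon⁻¹ = -1 ∧
    PowerSeries.coeff 2 MacMahon⁻¹ = -2 ∧ PowerSeries.coeff 3 MacMahon⁻¹ = -1 := by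
  have key := PowerSeries.mul_inv_cancel MacMahon hcc
  have i0 : PowerSeries.coeff 0 MacMahon⁻¹ = 1 := by
    rw [PowerSeries.coeff_zero_eq_constantCoeff, PowerSeries.constantCoeff_inv,
      ← PowerSeries.coeff_zero_eq_constantCoeff, M0]
    norm_num
  have e1 := congrArg (PowerSeries.coeff 1) key
  have e2 := congrArg (PowerSeries.coeff 2) key
  have e3 := congrArg (PowerSeries.coeff 3) key
  rw [coeff1_mul, M0, M1, i0, coeff_one] at e1
  rw [coeff2_mul, M0, M1, M2, i0, coeff_one] at e2
  rw [coeff3_mul, M0, M1, M2, M3, i0, coeff_one] at e3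
  norm_num at e1 e2 e3
  refine ⟨i0, by linarith, by linarith, by linarith⟩

lemma powM (m : ℕ) :
    PowerSeries.coeff 0 (MacMahon ^ m) = 1 ∧
    PowerSeries.coeff 1 (MacMahon ^ m) = m ∧
    PowerSeries.coeff 2 (MacMahon ^ m) = 5 * m / 2 + m ^ 2 / 2 ∧
    PowerSeries.coeff 3 (MacMahon ^ m) = 10 * m / 3 + 5 * m ^ 2 / 2 + m ^ 3 / 6 := by
  induction m with
  | zero => simp
  | succ n ih =>
    obtain ⟨h0, h1, h2, h3⟩ := ih
    rw [pow_succ]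
    rw [coeff0_mul, coeff1_mul, coeff2_mul, coeff3_mul, h0, h1, h2, h3, M0, M1, M2, M3]
    push_cast
    refine ⟨by ring, by ring, by ring, by ring⟩

lemma powMinv (m : ℕ) :
    PowerSeries.coeff 0 (MacMahon⁻¹ ^ m) = 1 ∧
    PowerSeries.coeff 1 (MacMahon⁻¹ ^ m) = -m ∧
    PowerSeries.coeff 2 (MacMahon⁻¹ ^ m) = -5 * m / 2 + m ^ 2 / 2 ∧
    PowerSeries.coeff 3 (MacMahon⁻¹ ^ m) = -10 * m / 3 + 5 * m ^ 2 / 2 - m ^ 3 / 6 := by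
  obtain ⟨i0, i1, i2, i3⟩ := Minv_coeffs
  induction m with
  | zero => simp
  | succ n ih =>
    obtain ⟨h0, h1, h2, h3⟩ := ih
    rw [pow_succ]
    rw [coeff0_mul, coeff1_mul, coeff2_mul, coeff3_mul, h0, h1, h2, h3, i0, i1, i2, i3]
    push_cast
    refine ⟨by ring, by ring, by ring, by ring⟩

lemma zpow_coeffs (χ : ℤ) :
    PowerSeries.coeff 0 (zpowPS MacMahon χ) = 1 ∧
    PowerSeries.coeff 1 (zpowPS MacMahon χ) = χ ∧
    PowerSeries.coeff 2 (zpowPS MacMahon χ) = 5 * χ / 2 + χ ^ 2 / 2 ∧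
    PowerSeries.coeff 3 (zpowPS MacMahon χ) = 10 * χ / 3 + 5 * χ ^ 2 / 2 + χ ^ 3 / 6 := by
  rcases le_or_gt 0 χ with h | h
  · have hz : (-χ).toNat = 0 := by omega
    have hc : ((χ.toNat : ℚ)) = (χ : ℚ) := by
      exact_mod_cast congrArg (Int.cast : ℤ → ℚ) (Int.toNat_of_nonneg h)
    rw [zpowPS, hz, pow_zero, mul_one]
    obtain ⟨h0, h1, h2, h3⟩ := powM χ.toNat
    rw [h0, h1, h2, h3, hc]
    exact ⟨rfl, rfl, rfl, rfl⟩
  · have hz : χ.toNat = 0 := by omega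
    have hc : (((-χ).toNat : ℚ)) = -(χ : ℚ) := by
      have := congrArg (Int.cast : ℤ → ℚ) (Int.toNat_of_nonneg (by omega : (0:ℤ) ≤ -χ))
      push_cast at this
      exact this
    rw [zpowPS, hz, pow_zero, one_mul]
    obtain ⟨h0, h1, h2, h3⟩ := powMinv (-χ).toNat
    rw [h0, h1, h2, h3, hc]
    refine ⟨rfl, by ring, by ring, by ring⟩

lemma Nser_coeffs :
    PowerSeries.coeff 0 Nser = 0 ∧ PowerSeries.coeff 1 Nser = 1 ∧
    PowerSeries.coeff 2 Nser = 5 ∧ PowerSeries.coeff 3 Nser = 10 := by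
  obtain ⟨i0, i1, i2, i3⟩ := Minv_coeffs
  have x0 : PowerSeries.coeff 0 (PowerSeries.X * PowerSeries.derivativeFun MacMahon) = 0 := by
    rw [coeff0_mul, PowerSeries.coeff_zero_eq_constantCoeff, constantCoeff_X, zero_mul]
  have x1 : PowerSeries.coeff 1 (PowerSeries.X * PowerSeries.derivativeFun MacMahon) = 1 := by
    rw [show (1:ℕ) = 0 + 1 from rfl, PowerSeries.coeff_succ_X_mul,
      (show ∀ n, PowerSeries.coeff n (PowerSeries.derivativeFun MacMahon) = _ from PowerSeries.coeff_derivative MacMahon), M1]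
    norm_num
  have x2 : PowerSeries.coeff 2 (PowerSeries.X * PowerSeries.derivativeFun MacMahon) = 6 := by
    rw [show (2:ℕ) = 1 + 1 from rfl, PowerSeries.coeff_succ_X_mul,
      (show ∀ n, PowerSeries.coeff n (PowerSeries.derivativeFun MacMahon) = _ from PowerSeries.coeff_derivative MacMahon), M2]
    norm_num
  have x3 : PowerSeries.coeff 3 (PowerSeries.X * PowerSeries.derivativeFun MacMahon) = 18 := by
    rw [show (3:ℕ) = 2 + 1 from rfl, PowerSeries.coeff_succ_X_mul,
      (show ∀ n, PowerSeries.coeff n (PowerSeries.derivativeFun MacMahon) = _ from PowerSeries.coeff_derivative MacMahon), M3]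
    norm_num
  rw [Nser, coeff0_mul, coeff1_mul, coeff2_mul, coeff3_mul, x0, x1, x2, x3, i0, i1, i2, i3]
  norm_num

lemma brace_coeff3 (χ : ℤ) :
    PowerSeries.coeff 3 (brace DeltaP (zpowPS MacMahon χ) (zpowPS MacMahon χ) Nser) =
      (χ : ℚ) ^ 2 + 10 * χ + 10 := by
  obtain ⟨z0, z1, z2, z3⟩ := zpow_coeffs χ
  obtain ⟨n0, n1, n2, n3⟩ := Nser_coeffs
  rw [brace, coeff_mk, Finset.sum_filter]
  rw [Finset.sum_product]
  simp only [Finset.sum_product]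
  simp only [Finset.sum_range_succ, Finset.sum_range_zero]
  have c0 : PowerSeries.constantCoeff (zpowPS MacMahon χ) = 1 := by
    rw [← PowerSeries.coeff_zero_eq_constantCoeff]; exact z0
  norm_num [DeltaP]
  rw [c0, z1, n1, n2, n3]
  ring

theorem stmt10' (χ : ℤ) :
    PowerSeries.coeff 3 (DT2 χ) =
      -(((χ : ℚ) ^ 3 + 15 * (χ : ℚ) ^ 2 + 20 * (χ : ℚ)) / 6) := by
  obtain ⟨_, _, _, z3⟩ := zpow_coeffs (2 * χ)
  rw [DT2, map_sub, map_smul, map_smul, z3, brace_coeff3, smul_eq_mul, smul_eq_mul]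
  push_cast
  ring

/-- the coefficient of `q³` in `DT2(q)` equals `−(χ³ + 15χ² + 20χ)/6`. -/
theorem stmt10 (χ : ℤ) :
    PowerSeries.coeff 3 (DT2 χ) =
      -(((χ : ℚ) ^ 3 + 15 * (χ : ℚ) ^ 2 + 20 * (χ : ℚ)) / 6) :=
  stmt10' χ
end
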